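/- Let t ≥ 2 and k ≥ 2 be integers, let m be an even integer with m ≥ 4(t+k)+2, let n be an integer with (t−1)(m−1) ≤ n−1 < t(m−1), and set p = ⌊(n−1)/t⌋. If p = m−σ for some integer σ with 2 ≤ σ ≤ k, then R(C_m, B_n^{(k)}) ≥ n + kp + σ − 1; that is, there is a graph on n + kp + σ − 2 vertices containing no cycle of length m whose complement contains no B_n^{(k)}. -/

import Mathlib

/-- `G` contains a cycle of length `m`. -/
def HasCycleLen {V : Type*} (G : SimpleGraph V) (m : ℕ) : Prop :=
  ∃ (v : V) (c : G.Walk v v), c.IsCycle ∧ c.length = m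

/-- `G` contains the book `B_n^{(k)}`: a clique on `k` vertices together with
`n` further vertices each adjacent to all of them. -/
def HasBook {V : Type*} (G : SimpleGraph V) (k n : ℕ) : Prop :=
  ∃ S T : Finset V, S.card = k ∧ T.card = n ∧ Disjoint S T ∧
    (∀ u ∈ S, ∀ v ∈ S, u ≠ v → G.Adj u v) ∧
    (∀ u ∈ S, ∀ v ∈ T, G.Adj u v)

/-- Every simple graph on `N` vertices contains `C_m` or its complement contains
`B_n^{(k)}`. The Ramsey number `R(C_m, B_n^{(k)})` is the least such `N`. -/
def RamseyProp (m k n N : ℕ) : Prop :=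
  ∀ G : SimpleGraph (Fin N), HasCycleLen G m ∨ HasBook Gᶜ k n

namespace Stmt6

open SimpleGraph Finset

section Gadget

variable (M R q0 L : ℕ) (bs : ℕ → ℕ)

/-- Vertex type: clique components ⊕ (center clique ⊕ block vertices). -/
abbrev Vx := (Fin R × Fin M) ⊕ (Fin q0 ⊕ (Σ i : Fin L, Fin (bs i.val)))

variable {M R q0 L bs}

def gadj : Vx M R q0 L bs → Vx M R q0 L bs → Prop
  | .inl a, .inl b => a.1 = b.1 ∧ a ≠ b
  | .inl _, .inr _ => False
  | .inr _, .inl _ => False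
  | .inr (.inl a), .inr (.inl b) => a ≠ b
  | .inr (.inl _), .inr (.inr s) => s.2.val = 0
  | .inr (.inr s), .inr (.inl _) => s.2.val = 0
  | .inr (.inr s), .inr (.inr u) => s.1 = u.1 ∧ s ≠ u

variable (M R q0 L bs)

def GG : SimpleGraph (Vx M R q0 L bs) where
  Adj := gadj
  symm := by
    refine ⟨?_⟩; rintro (a | a | a) (b | b | b) h <;> simp only [gadj] at h ⊢
    · exact ⟨h.1.symm, h.2.symm⟩
    · exact h.symm
    · exact h
    · exact h
    · exact ⟨h.1.symm, h.2.symm⟩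
  loopless := by
    refine ⟨?_⟩; rintro (a | a | a) h <;> simp only [gadj] at h
    · exact h.2 rfl
    · exact h rfl
    · exact h.2 rfl


variable {M R q0 L bs}
variable (hbs0 : ∀ j, 0 < bs j)

/-- the hub vertex of block `i` -/
def hubV (i : Fin L) : Vx M R q0 L bs := .inr (.inr ⟨i, ⟨0, hbs0 i.val⟩⟩)

/-- `v` is a vertex of block `i` -/
def inBlock (i : Fin L) (v : Vx M R q0 L bs) : Prop := ∃ x, v = .inr (.inr ⟨i, x⟩)

/-- `v` is a non-hub vertex of block `i` -/
def nonHub (i : Fin L) (v : Vx M R q0 L bs) : Prop :=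
  ∃ x : Fin (bs i.val), x.val ≠ 0 ∧ v = .inr (.inr ⟨i, x⟩)

def isCenter (v : Vx M R q0 L bs) : Prop := ∃ a, v = .inr (.inl a)

lemma nonHub_inBlock {i : Fin L} {v : Vx M R q0 L bs} (h : nonHub i v) : inBlock i v := by
  obtain ⟨x, -, rfl⟩ := h; exact ⟨x, rfl⟩

lemma nonHub_ne_hub {i : Fin L} {v : Vx M R q0 L bs} (h : nonHub i v) :
    v ≠ hubV hbs0 i := by
  obtain ⟨x, hx, rfl⟩ := h
  intro hcon
  rw [hubV] at hcon
  simp only [Sum.inr.injEq, Sigma.mk.inj_iff, heq_eq_eq, true_and] at hcon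
  exact hx (by rw [hcon])

lemma hub_not_nonHub {i : Fin L} : ¬ nonHub i (hubV (M := M) (R := R) (q0 := q0) hbs0 i) :=
  fun h => nonHub_ne_hub hbs0 h rfl

lemma hub_inBlock {i : Fin L} : inBlock (M := M) (R := R) (q0 := q0) i (hubV hbs0 i) :=
  ⟨_, rfl⟩

/-- neighbors of a non-hub vertex of block `i` are in block `i` -/
lemma adj_nonHub {i : Fin L} {v w : Vx M R q0 L bs} (hv : nonHub i v)
    (h : gadj v w) : inBlock i w := by
  obtain ⟨x, hx, rfl⟩ := hv
  match w with
  | .inl b => exact absurd h (by simp [gadj])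
  | .inr (.inl b) => exact absurd h hx
  | .inr (.inr ⟨j, y⟩) =>
    obtain ⟨hij, -⟩ := h
    subst hij
    exact ⟨y, rfl⟩

/-- neighbors of the hub of block `i` are centers or in block `i` -/
lemma adj_hub {i : Fin L} {w : Vx M R q0 L bs} (h : gadj (hubV hbs0 i) w) :
    isCenter w ∨ inBlock i w := by
  match w with
  | .inl b => exact absurd h (by simp [gadj, hubV])
  | .inr (.inl b) => exact Or.inl ⟨b, rfl⟩
  | .inr (.inr ⟨j, y⟩) =>
    obtain ⟨hij, -⟩ := h
    exact Or.inr (by subst hij; exact ⟨y, rfl⟩)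

/-- Confinement: a walk starting at a non-hub vertex of block `i` and ending outside
block `i` must pass through the hub of block `i`. -/
lemma conf {i : Fin L} {b : Vx M R q0 L bs} (hb : ¬ inBlock i b) :
    ∀ {a : Vx M R q0 L bs} (w : (GG M R q0 L bs).Walk a b), nonHub i a →
      hubV hbs0 i ∈ w.support := by
  intro a w
  induction w with
  | nil => exact fun ha => absurd (nonHub_inBlock ha) hb
  | @cons u u' _ h w ih =>
    intro ha
    have hu' : inBlock i u' := adj_nonHub ha h
    by_cases hh : u' = hubV hbs0 i
    · rw [SimpleGraph.Walk.support_cons]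
      exact List.mem_cons_of_mem _ (hh ▸ w.start_mem_support)
    · obtain ⟨x, hu⟩ := hu'
      subst hu
      have hx : x.val ≠ 0 := by
        intro h0
        exact hh (congrArg _ (congrArg _ (congrArg (Sigma.mk i) (Fin.ext h0))))
      rw [SimpleGraph.Walk.support_cons]
      exact List.mem_cons_of_mem _ (ih hb ⟨x, hx, rfl⟩)

variable (M R q0 L bs)

def compF (cc : Fin R) : Finset (Vx M R q0 L bs) :=
  Finset.univ.image (fun y : Fin M => .inl (cc, y))

def centerF : Finset (Vx M R q0 L bs) :=
  Finset.univ.image (fun a : Fin q0 => .inr (.inl a))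

def blockF (i : Fin L) : Finset (Vx M R q0 L bs) :=
  Finset.univ.image (fun x : Fin (bs i.val) => .inr (.inr ⟨i, x⟩))

variable {M R q0 L bs}

def hubsF : Finset (Vx M R q0 L bs) :=
  Finset.univ.image (fun i : Fin L => hubV (M := M) (R := R) (q0 := q0) hbs0 i)

lemma mem_compF {cc : Fin R} {z : Vx M R q0 L bs} :
    z ∈ compF M R q0 L bs cc ↔ ∃ y, z = .inl (cc, y) := by
  simp [compF, eq_comm]

lemma mem_centerF {z : Vx M R q0 L bs} :
    z ∈ centerF M R q0 L bs ↔ isCenter z := by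
  simp [centerF, isCenter, eq_comm]

lemma mem_blockF {i : Fin L} {z : Vx M R q0 L bs} :
    z ∈ blockF M R q0 L bs i ↔ inBlock i z := by
  simp [blockF, inBlock, eq_comm]

lemma mem_hubsF {z : Vx M R q0 L bs} :
    z ∈ hubsF (M := M) (R := R) (q0 := q0) hbs0 ↔ ∃ i, z = hubV hbs0 i := by
  simp [hubsF, eq_comm]

lemma card_compF (cc : Fin R) : (compF M R q0 L bs cc).card = M := by
  rw [compF, Finset.card_image_of_injective, Finset.card_univ, Fintype.card_fin]
  intro a b hab
  simpa using hab

lemma card_centerF : (centerF M R q0 L bs).card = q0 := by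
  rw [centerF, Finset.card_image_of_injective, Finset.card_univ, Fintype.card_fin]
  intro a b hab
  simpa using hab

lemma card_blockF (i : Fin L) : (blockF M R q0 L bs i).card = bs i.val := by
  rw [blockF, Finset.card_image_of_injective, Finset.card_univ, Fintype.card_fin]
  intro a b hab
  simpa using hab

lemma card_hubsF : (hubsF (M := M) (R := R) (q0 := q0) (L := L) hbs0).card = L := by
  rw [hubsF, Finset.card_image_of_injective, Finset.card_univ, Fintype.card_fin]
  intro a b hab
  simp only [hubV, Sum.inr.injEq, Sigma.mk.inj_iff] at hab
  exact hab.1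

/- ### generic walk helpers -/

lemma cycle_decomp {V : Type*} {G : SimpleGraph V} {x : V} (d : G.Walk x x) (hd : d.IsCycle) :
    ∃ (u : V) (e : G.Adj x u) (w : G.Walk u x), d = SimpleGraph.Walk.cons e w := by
  cases d with
  | nil => exact absurd rfl hd.ne_nil
  | cons e w => exact ⟨_, e, w, rfl⟩

lemma mem_support_iff_mem_tail {V : Type*} {G : SimpleGraph V} {x z : V}
    (w : G.Walk x x) (hw : w ≠ SimpleGraph.Walk.nil) :
    z ∈ w.support ↔ z ∈ w.support.tail := by
  cases w with
  | nil => exact absurd rfl hw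
  | cons e p =>
    rw [SimpleGraph.Walk.support_cons]
    constructor
    · rintro h
      rcases List.mem_cons.mp h with rfl | h
      · exact p.end_mem_support
      · exact h
    · exact fun h => List.mem_cons_of_mem _ h

lemma mem_support_rotate {V : Type*} {G : SimpleGraph V} [DecidableEq V] {x u z : V}
    (c : G.Walk x x) (hc : c.IsCycle) (hu : u ∈ c.support) :
    z ∈ (c.rotate _ hu).support ↔ z ∈ c.support := by
  rw [mem_support_iff_mem_tail _ (hc.rotate hu).ne_nil, mem_support_iff_mem_tail _ hc.ne_nil]
  exact (SimpleGraph.Walk.support_rotate c _ hu).mem_iff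

lemma takeUntil_avoid {V : Type*} {G : SimpleGraph V} [DecidableEq V] {a b z : V}
    (w : G.Walk a b) (hnodup : w.support.Nodup) (hz : z ∈ w.support) (hzb : z ≠ b) :
    b ∉ (w.takeUntil z hz).support := by
  intro hcon
  have hspec : w.support = (w.takeUntil z hz).support ++ (w.dropUntil z hz).support.tail := by
    conv_lhs => rw [← w.take_spec hz]
    rw [SimpleGraph.Walk.support_append]
  rw [hspec] at hnodup
  have hb2 : b ∈ (w.dropUntil z hz).support.tail := by
    have hend : b ∈ (w.dropUntil z hz).support := SimpleGraph.Walk.end_mem_support _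
    rw [SimpleGraph.Walk.support_eq_cons] at hend
    rcases List.mem_cons.mp hend with h | h
    · exact absurd h.symm hzb
    · exact h
  exact (List.disjoint_of_nodup_append hnodup) hcon hb2

/- ### no long cycles -/

theorem cycle_len_le (hbs0 : ∀ j, 0 < bs j) (hq : q0 + L ≤ M) (hbsM : ∀ j, bs j ≤ M)
    {v : Vx M R q0 L bs} (c : (GG M R q0 L bs).Walk v v) (hc : c.IsCycle) :
    c.length ≤ M := by
  classical
  suffices hB : ∃ B : Finset (Vx M R q0 L bs), B.card ≤ M ∧ ∀ z ∈ c.support, z ∈ B by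
    obtain ⟨B, hBc, hBs⟩ := hB
    have hnd : c.support.tail.Nodup := hc.support_nodup
    have hsub : c.support.tail.toFinset ⊆ B := by
      intro z hz
      exact hBs z (List.mem_of_mem_tail (List.mem_toFinset.mp hz))
    have hcard := Finset.card_le_card hsub
    rw [List.toFinset_card_of_nodup hnd] at hcard
    have hlen := SimpleGraph.Walk.length_support c
    have htl : c.support.tail.length + 1 = c.support.length := by
      rw [SimpleGraph.Walk.support_eq_cons]; simp
    omega
  by_cases hA : ∃ (i : Fin L) (y : Vx M R q0 L bs), y ∈ c.support ∧ nonHub i y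
  · obtain ⟨i, y, hy, hyA⟩ := hA
    refine ⟨blockF M R q0 L bs i, by rw [card_blockF]; exact hbsM _, ?_⟩
    intro z hz
    rw [mem_blockF]
    by_contra hzB
    have hzhub : z ≠ hubV hbs0 i := fun h => hzB (h ▸ hub_inBlock hbs0)
    have hhub : hubV hbs0 i ∈ c.support := by
      have hz' : z ∈ (c.rotate _ hy).support := (mem_support_rotate c hc hy).mpr hz
      have h1 : hubV hbs0 i ∈ ((c.rotate _ hy).takeUntil z hz').support :=
        conf hbs0 hzB _ hyA
      exact (mem_support_rotate c hc hy).mp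
        (SimpleGraph.Walk.support_takeUntil_subset _ hz' h1)
    obtain ⟨u1, e, w, hde⟩ := cycle_decomp (c.rotate _ hhub) (hc.rotate hhub)
    have hnodW : w.support.Nodup := by
      have h2 := (hc.rotate hhub).support_nodup
      rw [hde, SimpleGraph.Walk.support_cons] at h2
      exact h2
    have hmemd : ∀ z' : Vx M R q0 L bs,
        z' ∈ w.support ∨ z' = hubV hbs0 i ↔ z' ∈ c.support := by
      intro z'
      rw [← mem_support_rotate c hc hhub, hde, SimpleGraph.Walk.support_cons]
      constructor
      · rintro (h | rfl)
        · exact List.mem_cons_of_mem _ h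
        · exact List.mem_cons_self
      · intro h
        rcases List.mem_cons.mp h with h | h
        · exact Or.inr h
        · exact Or.inl h
    have hyw : y ∈ w.support := by
      rcases (hmemd y).mpr hy with h | h
      · exact h
      · exact absurd h (nonHub_ne_hub hbs0 hyA)
    have hzw : z ∈ w.support := by
      rcases (hmemd z).mpr hz with h | h
      · exact h
      · exact absurd h hzhub
    have e' : gadj (hubV hbs0 i) u1 := e
    have hne : u1 ≠ hubV hbs0 i := (e.ne).symm
    rcases adj_hub hbs0 e' with hcen | hblk
    · -- u1 is a center vertex
      have hu1nb : ¬ inBlock i u1 := by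
        rintro ⟨x1, hx1⟩
        obtain ⟨a, rfl⟩ := hcen
        simp at hx1
      have hno : hubV hbs0 i ∉ (w.takeUntil y hyw).support :=
        takeUntil_avoid w hnodW hyw (nonHub_ne_hub hbs0 hyA)
      have := conf hbs0 hu1nb (w.takeUntil y hyw).reverse hyA
      rw [SimpleGraph.Walk.support_reverse, List.mem_reverse] at this
      exact hno this
    · -- u1 in block i, hence non-hub
      obtain ⟨x1, hx1⟩ := hblk
      have hx1v : x1.val ≠ 0 := by
        intro h0
        apply hne
        rw [hx1, hubV]
        exact congrArg _ (congrArg _ (congrArg (Sigma.mk i) (Fin.ext h0)))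
      have hno : hubV hbs0 i ∉ (w.takeUntil z hzw).support :=
        takeUntil_avoid w hnodW hzw hzhub
      exact hno (conf hbs0 hzB (w.takeUntil z hzw) ⟨x1, hx1v, hx1⟩)
  · push_neg at hA
    rcases Classical.em (∃ (cc : Fin R) (y : Fin M), (Sum.inl (cc, y) : Vx M R q0 L bs) ∈ c.support) with hI | hI
    · obtain ⟨cc, yy, hmem⟩ := hI
      refine ⟨compF M R q0 L bs cc, by rw [card_compF], ?_⟩
      have hstay : ∀ (a b : Vx M R q0 L bs) (w : (GG M R q0 L bs).Walk a b),
          (∃ y, a = .inl (cc, y)) → ∀ z ∈ w.support, ∃ y, z = .inl (cc, y) := by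
        intro a b w
        induction w with
        | nil =>
          rintro ⟨y, rfl⟩ z hz
          rw [SimpleGraph.Walk.support_nil] at hz
          exact ⟨y, (List.mem_singleton.mp hz) ▸ rfl⟩
        | @cons u u' _ h w ih =>
          rintro ⟨y, rfl⟩ z hz
          rw [SimpleGraph.Walk.support_cons] at hz
          rcases List.mem_cons.mp hz with rfl | hz
          · exact ⟨y, rfl⟩
          · have h' : gadj (Sum.inl (cc, y)) u' := h
            match u' with
            | .inl (cc', y') =>
              obtain ⟨h1, -⟩ := h'
              have h1' : cc = cc' := h1
              exact ih ⟨y', by rw [h1']⟩ z hz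
            | .inr _ => exact absurd h' (by simp [gadj])
      intro z hz
      rw [mem_compF]
      have hz' : z ∈ (c.rotate _ hmem).support := (mem_support_rotate c hc hmem).mpr hz
      exact hstay _ _ (c.rotate _ hmem) ⟨yy, rfl⟩ z hz'
    · push_neg at hI
      refine ⟨centerF M R q0 L bs ∪ hubsF hbs0, ?_, ?_⟩
      · calc (centerF M R q0 L bs ∪ hubsF hbs0).card
            ≤ (centerF M R q0 L bs).card + (hubsF (M := M) (R := R) (q0 := q0) (L := L) hbs0).card :=
              Finset.card_union_le _ _
          _ ≤ M := by rw [card_centerF, card_hubsF]; exact hq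
      · intro z hz
        rw [Finset.mem_union, mem_centerF, mem_hubsF]
        match z, hz with
        | .inl (cc, y), hz => exact absurd hz (hI cc y)
        | .inr (.inl a), hz => exact Or.inl ⟨a, rfl⟩
        | .inr (.inr ⟨i, x⟩), hz =>
          right
          refine ⟨i, ?_⟩
          have hx0 : x.val = 0 := by
            by_contra hxx
            exact hA i _ hz ⟨x, hxx, rfl⟩
          rw [hubV]
          exact congrArg _ (congrArg _ (congrArg (Sigma.mk i) (Fin.ext hx0)))

/- ### no book -/

theorem no_book {p s' k n : ℕ} (hbs0 : ∀ j, 0 < bs j)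
    (hM : M = p + s') (hq : q0 + L = M) (hbsp : ∀ j, p + 1 ≤ bs j)
    (hs : 1 ≤ s') (hsk : s' ≤ k) (hk : 1 ≤ k)
    (hcard : Fintype.card (Vx M R q0 L bs) < n + (k * p + s')) :
    ¬ HasBook (GG M R q0 L bs)ᶜ k n := by
  classical
  rintro ⟨S, T, hSc, hTc, hST, hSS, hSTadj⟩
  have hind : ∀ u ∈ S, ∀ v ∈ S, u ≠ v → ¬ (GG M R q0 L bs).Adj u v := by
    intro u hu v hv huv
    exact ((SimpleGraph.compl_adj _ _ _).mp (hSS u hu v hv huv)).2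
  set g : Vx M R q0 L bs → Finset (Vx M R q0 L bs) := fun v =>
    match v with
    | .inl (cc, _) => compF M R q0 L bs cc
    | .inr (.inl _) => centerF M R q0 L bs ∪ hubsF hbs0
    | .inr (.inr s) =>
      if (∃ w ∈ S, isCenter w) then (blockF M R q0 L bs s.1).erase (hubV hbs0 s.1)
      else blockF M R q0 L bs s.1
    with hgdef
  have hgblock : ∀ st : (Σ i : Fin L, Fin (bs i.val)),
      g (Sum.inr (Sum.inr st)) =
        if (∃ w ∈ S, isCenter w) then (blockF M R q0 L bs st.1).erase (hubV hbs0 st.1)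
        else blockF M R q0 L bs st.1 := fun _ => rfl
  -- each g v is contained in the closed neighborhood of v
  have hsub : ∀ v ∈ S, ∀ z ∈ g v, z = v ∨ (GG M R q0 L bs).Adj v z := by
    rintro v hv z hz
    match v with
    | .inl (cc, x) =>
      obtain ⟨y, rfl⟩ := mem_compF.mp hz
      by_cases hxy : Sum.inl (cc, y) = (Sum.inl (cc, x) : Vx M R q0 L bs)
      · exact Or.inl hxy
      · exact Or.inr ⟨rfl, fun hcon => hxy (by rw [hcon])⟩
    | .inr (.inl a) =>
      rcases Finset.mem_union.mp hz with hz | hz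
      · obtain ⟨b, rfl⟩ := mem_centerF.mp hz
        by_cases hab : (Sum.inr (Sum.inl b) : Vx M R q0 L bs) = Sum.inr (Sum.inl a)
        · exact Or.inl hab
        · refine Or.inr ?_
          show a ≠ b
          intro hcon
          exact hab (by rw [hcon])
      · obtain ⟨i, rfl⟩ := (mem_hubsF hbs0).mp hz
        exact Or.inr rfl
    | .inr (.inr s) =>
      have hz' : z ∈ blockF M R q0 L bs s.1 := by
        rw [hgblock s] at hz
        by_cases hC : (∃ w ∈ S, isCenter (M := M) (R := R) (q0 := q0) (L := L) (bs := bs) w)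
        · rw [if_pos hC] at hz
          exact Finset.mem_of_mem_erase hz
        · rwa [if_neg hC] at hz
      obtain ⟨x, rfl⟩ := mem_blockF.mp hz'
      by_cases hxs : (Sum.inr (Sum.inr ⟨s.1, x⟩) : Vx M R q0 L bs) = Sum.inr (Sum.inr s)
      · exact Or.inl hxs
      · refine Or.inr ⟨rfl, ?_⟩
        intro hcon
        exact hxs (by rw [← hcon])
  -- the sets g v for v ∈ S are pairwise disjoint
  have hdisj : ∀ u ∈ S, ∀ v ∈ S, u ≠ v → Disjoint (g u) (g v) := by
    intro u hu v hv huv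
    rw [Finset.disjoint_left]
    intro z hzu hzv
    match u, v with
    | .inl (c1, x1), .inl (c2, x2) =>
      obtain ⟨y1, hy1⟩ := mem_compF.mp hzu
      obtain ⟨y2, hy2⟩ := mem_compF.mp hzv
      rw [hy1] at hy2
      have hc12 : c1 = c2 := by simpa using congrArg (fun w => match w with | Sum.inl (c, _) => c | _ => c1) hy2
      exact hind _ hu _ hv huv ⟨hc12, fun hcon => huv (by rw [hcon])⟩
    | .inl _, .inr (.inl _) =>
      obtain ⟨y1, hy1⟩ := mem_compF.mp hzu
      rcases Finset.mem_union.mp hzv with hz | hz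
      · obtain ⟨b, hb⟩ := mem_centerF.mp hz
        rw [hy1] at hb; simp at hb
      · obtain ⟨i, hi⟩ := (mem_hubsF hbs0).mp hz
        rw [hy1] at hi; simp [hubV] at hi
    | .inl _, .inr (.inr s) =>
      obtain ⟨y1, hy1⟩ := mem_compF.mp hzu
      have hzv' : z ∈ blockF M R q0 L bs s.1 := by
        rw [hgblock s] at hzv
        by_cases hC : (∃ w ∈ S, isCenter (M := M) (R := R) (q0 := q0) (L := L) (bs := bs) w)
        · rw [if_pos hC] at hzv; exact Finset.mem_of_mem_erase hzv
        · rwa [if_neg hC] at hzv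
      obtain ⟨x, hx⟩ := mem_blockF.mp hzv'
      rw [hy1] at hx; simp at hx
    | .inr (.inl _), .inl _ =>
      obtain ⟨y1, hy1⟩ := mem_compF.mp hzv
      rcases Finset.mem_union.mp hzu with hz | hz
      · obtain ⟨b, hb⟩ := mem_centerF.mp hz
        rw [hy1] at hb; simp at hb
      · obtain ⟨i, hi⟩ := (mem_hubsF hbs0).mp hz
        rw [hy1] at hi; simp [hubV] at hi
    | .inr (.inr s), .inl _ =>
      obtain ⟨y1, hy1⟩ := mem_compF.mp hzv
      have hzu' : z ∈ blockF M R q0 L bs s.1 := by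
        rw [hgblock s] at hzu
        by_cases hC : (∃ w ∈ S, isCenter (M := M) (R := R) (q0 := q0) (L := L) (bs := bs) w)
        · rw [if_pos hC] at hzu; exact Finset.mem_of_mem_erase hzu
        · rwa [if_neg hC] at hzu
      obtain ⟨x, hx⟩ := mem_blockF.mp hzu'
      rw [hy1] at hx; simp at hx
    | .inr (.inl a), .inr (.inl b) =>
      refine hind _ hu _ hv huv ?_
      show a ≠ b
      intro hcon
      exact huv (by rw [hcon])
    | .inr (.inl a), .inr (.inr s) =>
      have hC : (∃ w ∈ S, isCenter (M := M) (R := R) (q0 := q0) (L := L) (bs := bs) w) :=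
        ⟨_, hu, ⟨a, rfl⟩⟩
      rw [hgblock s, if_pos hC] at hzv
      obtain ⟨hzne, hzb⟩ := Finset.mem_erase.mp hzv
      obtain ⟨x, hx⟩ := mem_blockF.mp hzb
      rcases Finset.mem_union.mp hzu with hz | hz
      · obtain ⟨b, hb⟩ := mem_centerF.mp hz
        rw [hx] at hb; simp at hb
      · obtain ⟨i, hi⟩ := (mem_hubsF hbs0).mp hz
        have h2 : Sum.inr (Sum.inr ⟨s.1, x⟩) = (hubV hbs0 i : Vx M R q0 L bs) := by
          rw [← hx, hi]
        rw [hubV] at h2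
        simp only [Sum.inr.injEq, Sigma.mk.inj_iff] at h2
        obtain ⟨h3, -⟩ := h2
        apply hzne
        rw [hi, h3]
    | .inr (.inr s), .inr (.inl a) =>
      have hC : (∃ w ∈ S, isCenter (M := M) (R := R) (q0 := q0) (L := L) (bs := bs) w) :=
        ⟨_, hv, ⟨a, rfl⟩⟩
      rw [hgblock s, if_pos hC] at hzu
      obtain ⟨hzne, hzb⟩ := Finset.mem_erase.mp hzu
      obtain ⟨x, hx⟩ := mem_blockF.mp hzb
      rcases Finset.mem_union.mp hzv with hz | hz
      · obtain ⟨b, hb⟩ := mem_centerF.mp hz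
        rw [hx] at hb; simp at hb
      · obtain ⟨i, hi⟩ := (mem_hubsF hbs0).mp hz
        have h2 : Sum.inr (Sum.inr ⟨s.1, x⟩) = (hubV hbs0 i : Vx M R q0 L bs) := by
          rw [← hx, hi]
        rw [hubV] at h2
        simp only [Sum.inr.injEq, Sigma.mk.inj_iff] at h2
        obtain ⟨h3, -⟩ := h2
        apply hzne
        rw [hi, h3]
    | .inr (.inr s1), .inr (.inr s2) =>
      have hzu' : z ∈ blockF M R q0 L bs s1.1 := by
        rw [hgblock s1] at hzu
        by_cases hC : (∃ w ∈ S, isCenter (M := M) (R := R) (q0 := q0) (L := L) (bs := bs) w)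
        · rw [if_pos hC] at hzu; exact Finset.mem_of_mem_erase hzu
        · rwa [if_neg hC] at hzu
      have hzv' : z ∈ blockF M R q0 L bs s2.1 := by
        rw [hgblock s2] at hzv
        by_cases hC : (∃ w ∈ S, isCenter (M := M) (R := R) (q0 := q0) (L := L) (bs := bs) w)
        · rw [if_pos hC] at hzv; exact Finset.mem_of_mem_erase hzv
        · rwa [if_neg hC] at hzv
      obtain ⟨x1, hx1⟩ := mem_blockF.mp hzu'
      obtain ⟨x2, hx2⟩ := mem_blockF.mp hzv'
      rw [hx1] at hx2
      simp only [Sum.inr.injEq, Sigma.mk.inj_iff] at hx2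
      refine hind _ hu _ hv huv ⟨hx2.1, ?_⟩
      intro hcon
      exact huv (by rw [hcon])
  -- cardinality lower bounds for g v
  have hCHcard : (centerF M R q0 L bs ∪ hubsF hbs0).card = q0 + L := by
    rw [Finset.card_union_of_disjoint, card_centerF, card_hubsF]
    rw [Finset.disjoint_left]
    intro z hz1 hz2
    obtain ⟨b, rfl⟩ := mem_centerF.mp hz1
    obtain ⟨i, hi⟩ := (mem_hubsF hbs0).mp hz2
    simp [hubV] at hi
  have hlow : ∀ v ∈ S, p ≤ (g v).card := by
    intro v hv
    match v with
    | .inl (cc, x) =>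
      rw [show g (Sum.inl (cc, x)) = compF M R q0 L bs cc from rfl, card_compF]
      omega
    | .inr (.inl a) =>
      rw [show g (Sum.inr (Sum.inl a)) = centerF M R q0 L bs ∪ hubsF hbs0 from rfl, hCHcard]
      omega
    | .inr (.inr s) =>
      by_cases hC : (∃ w ∈ S, isCenter (M := M) (R := R) (q0 := q0) (L := L) (bs := bs) w)
      · have hmem : hubV hbs0 s.1 ∈ blockF M R q0 L bs s.1 := mem_blockF.mpr ⟨_, rfl⟩
        rw [hgblock s, if_pos hC, Finset.card_erase_of_mem hmem, card_blockF]
        have := hbsp s.1.val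
        omega
      · rw [hgblock s, if_neg hC, card_blockF]
        have := hbsp s.1.val
        omega
  -- sum bound
  have hcard1 : k * p + s' ≤ (S.biUnion g).card := by
    rw [Finset.card_biUnion hdisj]
    by_cases hC : (∃ w ∈ S, isCenter (M := M) (R := R) (q0 := q0) (L := L) (bs := bs) w)
    · obtain ⟨v₀, hv₀S, hv₀c⟩ := hC
      have h₀ : p + s' ≤ (g v₀).card := by
        obtain ⟨a, rfl⟩ := hv₀c
        rw [show g (Sum.inr (Sum.inl a)) = centerF M R q0 L bs ∪ hubsF hbs0 from rfl, hCHcard]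
        omega
      have hsum : ∑ v ∈ S, (g v).card = (∑ v ∈ S.erase v₀, (g v).card) + (g v₀).card :=
        (Finset.sum_erase_add S _ hv₀S).symm
      have h1 : (S.erase v₀).card • p ≤ ∑ v ∈ S.erase v₀, (g v).card :=
        Finset.card_nsmul_le_sum _ _ _ (fun x hx => hlow x (Finset.mem_of_mem_erase hx))
      have h2 : (S.erase v₀).card = k - 1 := by rw [Finset.card_erase_of_mem hv₀S, hSc]
      rw [h2, smul_eq_mul] at h1
      have hkp : (k - 1) * p + (p + s') = k * p + s' := by
        have hk1 : k - 1 + 1 = k := by omega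
        calc (k - 1) * p + (p + s') = ((k - 1) + 1) * p + s' := by ring
          _ = k * p + s' := by rw [hk1]
      omega
    · have hall : ∀ v ∈ S, p + 1 ≤ (g v).card := by
        intro v hv
        match v with
        | .inl (cc, x) =>
          rw [show g (Sum.inl (cc, x)) = compF M R q0 L bs cc from rfl, card_compF]
          omega
        | .inr (.inl a) => exact absurd ⟨_, hv, ⟨a, rfl⟩⟩ hC
        | .inr (.inr s) =>
          rw [hgblock s, if_neg hC, card_blockF]
          exact hbsp s.1.val
      have h1 : S.card • (p + 1) ≤ ∑ v ∈ S, (g v).card :=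
        Finset.card_nsmul_le_sum _ _ _ hall
      rw [hSc, smul_eq_mul] at h1
      have : k * (p + 1) = k * p + k := by ring
      omega
  -- conclusion
  have hdTU : Disjoint (S.biUnion g) T := by
    rw [Finset.disjoint_left]
    intro z hzU hzT
    obtain ⟨u, huS, hzg⟩ := Finset.mem_biUnion.mp hzU
    rcases hsub u huS z hzg with rfl | hadj
    · exact (Finset.disjoint_left.mp hST) huS hzT
    · exact ((SimpleGraph.compl_adj _ _ _).mp (hSTadj u huS z hzT)).2 hadj
  have hun : (S.biUnion g ∪ T).card = (S.biUnion g).card + T.card :=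
    Finset.card_union_of_disjoint hdTU
  have hle : (S.biUnion g ∪ T).card ≤ Fintype.card (Vx M R q0 L bs) := by
    rw [← Finset.card_univ]
    exact Finset.card_le_univ _
  rw [hTc] at hun
  omega

/- ### cardinality of the vertex type -/

lemma card_Vx : Fintype.card (Vx M R q0 L bs) = R * M + (q0 + ∑ i : Fin L, bs i.val) := by
  simp [Vx, Fintype.card_sum, Fintype.card_prod, Fintype.card_sigma, Fintype.card_fin]

end Gadget

/- ### transfer along embeddings -/

lemma comap_no_cycle {V W : Type*} {G : SimpleGraph W} (f : V ↪ W) {m : ℕ}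
    (h : ¬ HasCycleLen G m) : ¬ HasCycleLen (G.comap f) m := by
  rintro ⟨v, c, hc, hlen⟩
  refine h ⟨f v, c.map ⟨(f : V → W), fun {a b} hab => hab⟩, ?_, ?_⟩
  · exact hc.map f.injective
  · rw [SimpleGraph.Walk.length_map, hlen]

lemma comap_no_book {V W : Type*} {G : SimpleGraph W} (f : V ↪ W) {k n : ℕ}
    (h : ¬ HasBook Gᶜ k n) : ¬ HasBook (G.comap f)ᶜ k n := by
  rintro ⟨S, T, hSc, hTc, hST, hSS, hSTadj⟩
  classical
  refine h ⟨S.map f, T.map f, by rw [Finset.card_map, hSc], by rw [Finset.card_map, hTc],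
    (Finset.disjoint_map f).mpr hST, ?_, ?_⟩
  · intro u' hu' v' hv' hne
    obtain ⟨u, hu, rfl⟩ := Finset.mem_map.mp hu'
    obtain ⟨v, hv, rfl⟩ := Finset.mem_map.mp hv'
    have huv : u ≠ v := fun hcon => hne (by rw [hcon])
    have := (SimpleGraph.compl_adj _ _ _).mp (hSS u hu v hv huv)
    exact (SimpleGraph.compl_adj _ _ _).mpr ⟨hne, this.2⟩
  · intro u' hu' v' hv'
    obtain ⟨u, hu, rfl⟩ := Finset.mem_map.mp hu'
    obtain ⟨v, hv, rfl⟩ := Finset.mem_map.mp hv'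
    have := (SimpleGraph.compl_adj _ _ _).mp (hSTadj u hu v hv)
    exact (SimpleGraph.compl_adj _ _ _).mpr ⟨f.injective.ne this.1, this.2⟩

/- ### generic existence lemma -/

lemma generic_exists (m k n p s' M R q0 L N : ℕ) (bs : ℕ → ℕ)
    (hbs0 : ∀ j, 0 < bs j)
    (hM : M = p + s') (hq : q0 + L = M) (hbsp : ∀ j, p + 1 ≤ bs j) (hbsM : ∀ j, bs j ≤ M)
    (hs : 1 ≤ s') (hsk : s' ≤ k) (hk : 1 ≤ k) (hmM : M < m)
    (hN : Fintype.card (Vx M R q0 L bs) = N) (hNn : N < n + (k * p + s')) :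
    ∃ G : SimpleGraph (Fin N), ¬ HasCycleLen G m ∧ ¬ HasBook Gᶜ k n := by
  classical
  let e := Fintype.equivFinOfCardEq hN
  refine ⟨(GG M R q0 L bs).comap e.symm.toEmbedding, ?_, ?_⟩
  · refine comap_no_cycle e.symm.toEmbedding ?_
    rintro ⟨v, c, hc, hlen⟩
    have := cycle_len_le hbs0 (le_of_eq hq) hbsM c hc
    omega
  · refine comap_no_book e.symm.toEmbedding ?_
    exact no_book hbs0 hM hq hbsp hs hsk hk (by rw [hN]; exact hNn)


/- ### arithmetic helpers (products passed as opaque variables) -/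

lemma arith2 (p q0 L r n A B C D N : ℕ)
    (e3 : C + D + p = A + B) (hnr : A + r = n - 1) (hn : 2 ≤ n) (hq0 : q0 + L = p + 1)
    (hN : N = n + B) :
    D + r + (q0 + (C + L)) = N := by omega

lemma arith3 (p s q0 L r n A B C N : ℕ)
    (e3 : C + p = A + B) (hnr : A + r = n - 1) (hn : 2 ≤ n) (hq0 : q0 + L = p + s)
    (hs : 1 ≤ s) (hN : N + 1 = n + (B + s)) :
    q0 + (C + L + r) = N := by omega

end Stmt6

theorem stmt6 (t k m n p σ : ℕ) (ht : 2 ≤ t) (hk : 2 ≤ k) (hmEven : Even m)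
    (hm : 4 * (t + k) + 2 ≤ m)
    (hn1 : (t - 1) * (m - 1) ≤ n - 1) (hn2 : n - 1 < t * (m - 1))
    (hp : p = (n - 1) / t)
    (hσ1 : 2 ≤ σ) (hσ2 : σ ≤ k) (hpσ : p = m - σ) :
    (∀ N : ℕ, RamseyProp m k n N → n + k * p + σ - 1 ≤ N) ∧
    ∃ G : SimpleGraph (Fin (n + k * p + σ - 2)),
      ¬ HasCycleLen G m ∧ ¬ HasBook Gᶜ k n := by
  classical
  -- arithmetic groundwork
  have hmul : 1 ≤ (t - 1) * (m - 1) := Nat.mul_pos (by omega) (by omega)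
  have hn1' : 1 ≤ n - 1 := le_trans hmul hn1
  have hn2' : 2 ≤ n := by omega
  have hm' : m = p + σ := by omega
  have hrt : (n - 1) % t < t := Nat.mod_lt _ (by omega)
  have hnr : t * p + (n - 1) % t = n - 1 := by rw [hp]; exact Nat.div_add_mod (n - 1) t
  set r := (n - 1) % t with hrdef
  set B := k * p with hB
  have main : ∃ G : SimpleGraph (Fin (n + B + σ - 2)),
      ¬ HasCycleLen G m ∧ ¬ HasBook Gᶜ k n := by
    by_cases hσeq : σ = 2
    · -- σ = 2 : r clique components, L = t+k-1-r blocks all of size p+1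
      obtain ⟨L, hL⟩ : ∃ L, L + (r + 1) = t + k := ⟨t + k - r - 1, by omega⟩
      obtain ⟨q0, hq0⟩ : ∃ q, q + L = m - 1 := ⟨m - 1 - L, by omega⟩
      refine Stmt6.generic_exists m k n p 1 (m - 1) r q0 L _ (fun _ => p + 1)
        ?h1 ?h2 hq0 ?h4 ?h5 ?h6 ?h7 ?h8 ?h9 ?_ ?_
      case h1 => intro j; omega
      case h2 => omega
      case h4 => intro j; exact le_refl _
      case h5 => intro j; omega
      case h6 => exact le_refl 1
      case h7 => omega
      case h8 => omega
      case h9 => omega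
      · rw [Stmt6.card_Vx]
        have hsum : (∑ i : Fin L, (p + 1)) = L * (p + 1) := by
          rw [Finset.sum_const, Finset.card_univ, Fintype.card_fin, smul_eq_mul]
        rw [hsum]
        have e1 : r * (m - 1) = r * p + r := by
          have h5 : m - 1 = p + 1 := by omega
          rw [h5, Nat.mul_add, Nat.mul_one]
        have e2 : L * (p + 1) = L * p + L := by rw [Nat.mul_add, Nat.mul_one]
        rw [e1, e2]
        have e3 : L * p + r * p + p = t * p + k * p := by
          have h4 : L + r + 1 = t + k := by omega
          calc L * p + r * p + p = (L + r + 1) * p := by ring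
            _ = (t + k) * p := by rw [h4]
            _ = t * p + k * p := Nat.add_mul _ _ _
        have hq0' : q0 + L = p + 1 := by omega
        have hNeq : n + B + σ - 2 = n + k * p := by
          rw [hB, hσeq]; omega
        exact Stmt6.arith2 p q0 L r n (t * p) (k * p) (L * p) (r * p) _ e3 hnr hn2' hq0' hNeq
      · rw [hB]
        omega
    · -- σ ≥ 3 : one component, L = t+k-1 blocks, r of them of size p+2
      have hσ3 : 3 ≤ σ := by omega
      obtain ⟨L, hL⟩ : ∃ L, L + 1 = t + k := ⟨t + k - 1, by omega⟩
      obtain ⟨q0, hq0⟩ : ∃ q, q + L = m - 1 := ⟨m - 1 - L, by omega⟩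
      have hrL : r ≤ L := by omega
      refine Stmt6.generic_exists m k n p (σ - 1) (m - 1) 0 q0 L _
        (fun j => if j < r then p + 2 else p + 1)
        (fun j => by split <;> omega) (by omega) hq0
        (fun j => by split <;> omega) (fun j => by split <;> omega)
        (by omega) (by omega) (by omega) (by omega) ?_ ?_
      · rw [Stmt6.card_Vx]
        have hsum : (∑ i : Fin L, (if (i : ℕ) < r then p + 2 else p + 1)) = L * (p + 1) + r := by
          rw [Fin.sum_univ_eq_sum_range (fun j => if j < r then p + 2 else p + 1) L]
          calc (∑ j ∈ Finset.range L, (if j < r then p + 2 else p + 1))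
              = ∑ j ∈ Finset.range L, ((p + 1) + (if j < r then 1 else 0)) := by
                refine Finset.sum_congr rfl fun j hj => ?_
                split <;> omega
            _ = L * (p + 1) + ∑ j ∈ Finset.range L, (if j < r then 1 else 0) := by
                rw [Finset.sum_add_distrib, Finset.sum_const, Finset.card_range, smul_eq_mul]
            _ = L * (p + 1) + r := by
                congr 1
                rw [show (∑ j ∈ Finset.range L, if j < r then 1 else 0) =
                    ((Finset.range L).filter (fun j => j < r)).card from by
                  rw [Finset.card_filter]]
                have hfil : (Finset.range L).filter (fun j => j < r) = Finset.range r := by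
                  ext x
                  simp only [Finset.mem_filter, Finset.mem_range]
                  omega
                rw [hfil, Finset.card_range]
        rw [hsum, Nat.zero_mul, Nat.zero_add]
        have e2 : L * (p + 1) = L * p + L := by rw [Nat.mul_add, Nat.mul_one]
        rw [e2]
        have e3 : L * p + p = t * p + k * p := by
          calc L * p + p = (L + 1) * p := by ring
            _ = (t + k) * p := by rw [hL]
            _ = t * p + k * p := Nat.add_mul _ _ _
        have hq0' : q0 + L = p + (σ - 1) := by omega
        have hNeq : n + B + σ - 2 + 1 = n + (k * p + (σ - 1)) := by
          rw [hB]; omega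
        have goal' : q0 + (L * p + L + r) = n + B + σ - 2 :=
          Stmt6.arith3 p (σ - 1) q0 L r n (t * p) (k * p) (L * p) _ e3 hnr hn2' hq0'
            (by omega) hNeq
        omega
      · rw [hB]
        omega
  obtain ⟨G0, hG1, hG2⟩ := main
  refine ⟨?_, G0, hG1, hG2⟩
  intro N hRam
  by_contra hlt
  push_neg at hlt
  have hle : N ≤ n + B + σ - 2 := by omega
  rcases hRam (G0.comap (Fin.castLEEmb hle)) with hcyc | hbook
  · exact Stmt6.comap_no_cycle _ hG1 hcyc
  · exact Stmt6.comap_no_book _ hG2 hbook
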